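/- Consider the multilayer parking process on 3 sites with arrival word w (a finite list with entries in {0,1,2}). Then the number of layers r ≥ 1 such that both side columns are occupied at layer r in the final configuration κ_w (i.e., κ_w(0,r) and κ_w(2,r) are both true) equals min(n₀(w), n₂(w)), where n_x(w) denotes the number of arrivals at column x in w. -/

import Mathlib

/-- The landing layer of a particle arriving at column `x` in configuration `κ`:
the least layer `r ≥ 1` such that every column in the neighborhood
`N_x = {x-1, x, x+1} ∩ {0,1,2}` is unoccupied at layer `r`. -/
noncomputable def landingLayer (κ : Fin 3 → ℕ → Bool) (x : Fin 3) : ℕ :=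
  sInf {r : ℕ | 1 ≤ r ∧ ∀ y : Fin 3, |(x : ℤ) - (y : ℤ)| ≤ 1 → κ y r = false}

/-- Depositing one particle arriving at column `x` in configuration `κ`. -/
noncomputable def deposit (κ : Fin 3 → ℕ → Bool) (x : Fin 3) : Fin 3 → ℕ → Bool :=
  fun y r => if y = x ∧ r = landingLayer κ x then true else κ y r

/-- The configuration `κ_w` obtained from the empty configuration by processing
the arrivals in the word `w` in order. -/
noncomputable def parkConfig (w : List (Fin 3)) : Fin 3 → ℕ → Bool :=
  w.foldl deposit (fun _ _ => false)

/-- The set of layers occupied in column `x`. -/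
def col (κ : Fin 3 → ℕ → Bool) (x : Fin 3) : Set ℕ := {r | κ x r = true}

/-- The invariant maintained by the parking process. -/
def Good (κ : Fin 3 → ℕ → Bool) : Prop :=
  ∃ N : ℕ, (col κ 0 ∪ col κ 1 ∪ col κ 2 = Set.Icc 1 N) ∧
    (∀ r, κ 1 r = true → κ 0 r = false ∧ κ 2 r = false) ∧
    (col κ 0 ⊆ col κ 2 ∨ col κ 2 ⊆ col κ 0)

lemma col_deposit_self (κ : Fin 3 → ℕ → Bool) (x : Fin 3) :
    col (deposit κ x) x = insert (landingLayer κ x) (col κ x) := by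
  ext r
  by_cases hr : r = landingLayer κ x <;> simp [col, deposit, hr]

lemma col_deposit_ne (κ : Fin 3 → ℕ → Bool) {x y : Fin 3} (h : y ≠ x) :
    col (deposit κ x) y = col κ y := by
  ext r
  simp [col, deposit, h]

lemma good_step (κ : Fin 3 → ℕ → Bool) (x : Fin 3) (h : Good κ) :
    Good (deposit κ x) ∧ κ x (landingLayer κ x) = false := by
  obtain ⟨N, hU, hD, hC⟩ := h
  have hfin : ∀ y : Fin 3, col κ y ⊆ Set.Icc 1 N := by
    intro y r hr
    rw [← hU]
    fin_cases y
    · exact Or.inl (Or.inl hr)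
    · exact Or.inl (Or.inr hr)
    · exact Or.inr hr
  have htop : ∀ (y : Fin 3) (r : ℕ), N < r → κ y r = false := by
    intro y r hrN
    by_contra hcon
    have : r ∈ col κ y := by
      simp [col, Bool.not_eq_false] at hcon ⊢; exact hcon
    have := (hfin y this).2
    omega
  -- the defining set of the landing layer is nonempty
  have hAne : (N+1) ∈ {r : ℕ | 1 ≤ r ∧ ∀ y : Fin 3, |(x : ℤ) - (y : ℤ)| ≤ 1 → κ y r = false} := by
    refine ⟨by omega, fun y _ => htop y _ (by omega)⟩
  have hLmem : landingLayer κ x ∈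
      {r : ℕ | 1 ≤ r ∧ ∀ y : Fin 3, |(x : ℤ) - (y : ℤ)| ≤ 1 → κ y r = false} :=
    Nat.sInf_mem ⟨_, hAne⟩
  obtain ⟨L, hLdef⟩ : ∃ L, landingLayer κ x = L := ⟨_, rfl⟩
  rw [hLdef] at hLmem
  obtain ⟨hL1, hLnb⟩ := hLmem
  have hself : κ x L = false := hLnb x (by simp)
  refine ⟨?_, by rw [hLdef]; exact hself⟩
  -- case on which column the particle arrives at
  have hx : x = 0 ∨ x = 1 ∨ x = 2 := by fin_cases x <;> simp
  rcases hx with rfl | rfl | rfl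
  · -- x = 0
    have hκ0L : κ 0 L = false := hLnb 0 (by decide)
    have hκ1L : κ 1 L = false := hLnb 1 (by decide)
    have hc0 : col (deposit κ 0) 0 = insert L (col κ 0) := by
      rw [col_deposit_self, hLdef]
    have hc1 : col (deposit κ 0) 1 = col κ 1 := col_deposit_ne κ (by decide)
    have hc2 : col (deposit κ 0) 2 = col κ 2 := col_deposit_ne κ (by decide)
    by_cases hsub : col κ 2 ⊆ col κ 0
    · -- lands at N+1
      have hLeq : L = N + 1 := by
        apply le_antisymm
        · exact hLdef ▸ Nat.sInf_le hAne
        · by_contra hlt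
          push_neg at hlt
          have hLN : L ≤ N := by omega
          have : L ∈ Set.Icc 1 N := ⟨hL1, hLN⟩
          rw [← hU] at this
          rcases this with (h0 | h1) | h2
          · simp [col] at h0; simp [h0] at hκ0L
          · simp [col] at h1; simp [h1] at hκ1L
          · have := hsub h2; simp [col] at this; simp [this] at hκ0L
      refine ⟨N + 1, ?_, ?_, ?_⟩
      · rw [hc0, hc1, hc2]
        ext r
        simp only [Set.mem_union, Set.mem_insert_iff, Set.mem_Icc]
        constructor
        · rintro (((heq | h0) | h1) | h2)
          · omega
          · have := hfin 0 h0; simp [Set.mem_Icc] at this; omega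
          · have := hfin 1 h1; simp [Set.mem_Icc] at this; omega
          · have := hfin 2 h2; simp [Set.mem_Icc] at this; omega
        · intro hr
          by_cases hrN : r ≤ N
          · have : r ∈ Set.Icc 1 N := ⟨hr.1, hrN⟩
            rw [← hU] at this
            rcases this with (h0 | h1) | h2
            · exact Or.inl (Or.inl (Or.inr h0))
            · exact Or.inl (Or.inr h1)
            · exact Or.inr h2
          · have : r = N + 1 := by omega
            exact Or.inl (Or.inl (Or.inl (this.trans hLeq.symm)))
      · intro r hr
        have hr' : κ 1 r = true := by simpa [deposit, hLdef] using hr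
        obtain ⟨h0, h2⟩ := hD r hr'
        have hrL : r ≠ L := by intro e; rw [e] at hr'; simp [hr'] at hκ1L
        constructor
        · simp [deposit, hLdef, hrL, h0]
        · simp [deposit, hLdef, h2]
      · right
        rw [hc0, hc2]
        exact hsub.trans (Set.subset_insert _ _)
    · -- lands inside, at a layer occupied in column 2
      have hS02 : col κ 0 ⊆ col κ 2 := hC.resolve_right hsub
      obtain ⟨m, hm2, hm0⟩ := Set.not_subset.mp hsub
      have hm1 : κ 1 m = false := by
        by_contra hcon
        simp [Bool.not_eq_false] at hcon
        have := (hD m hcon).2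
        simp [col, this] at hm2
      have hmIcc := hfin 2 hm2
      have hmA : m ∈ {r : ℕ | 1 ≤ r ∧ ∀ y : Fin 3, |(((0:Fin 3)) : ℤ) - (y : ℤ)| ≤ 1 → κ y r = false} := by
        refine ⟨hmIcc.1, ?_⟩
        intro y hy
        fin_cases y
        · simpa [col, Bool.not_eq_true] using hm0
        · exact hm1
        · exact absurd hy (by decide)
      have hLm : L ≤ m := hLdef ▸ Nat.sInf_le hmA
      have hLN : L ≤ N := hLm.trans hmIcc.2
      have hL2 : L ∈ col κ 2 := by
        have : L ∈ Set.Icc 1 N := ⟨hL1, hLN⟩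
        rw [← hU] at this
        rcases this with (h0 | h1) | h2
        · simp [col] at h0; simp [h0] at hκ0L
        · simp [col] at h1; simp [h1] at hκ1L
        · exact h2
      refine ⟨N, ?_, ?_, ?_⟩
      · rw [hc0, hc1, hc2, ← hU]
        ext r
        simp only [Set.mem_union, Set.mem_insert_iff]
        constructor
        · rintro (((heq | h0) | h1) | h2)
          · rw [heq]; exact Or.inr hL2
          · exact Or.inl (Or.inl h0)
          · exact Or.inl (Or.inr h1)
          · exact Or.inr h2
        · rintro ((h0 | h1) | h2)
          · exact Or.inl (Or.inl (Or.inr h0))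
          · exact Or.inl (Or.inr h1)
          · exact Or.inr h2
      · intro r hr
        have hr' : κ 1 r = true := by simpa [deposit, hLdef] using hr
        obtain ⟨h0, h2⟩ := hD r hr'
        have hrL : r ≠ L := by intro e; rw [e] at hr'; simp [hr'] at hκ1L
        constructor
        · simp [deposit, hLdef, hrL, h0]
        · simp [deposit, hLdef, h2]
      · left
        rw [hc0, hc2]
        exact Set.insert_subset hL2 hS02
  · -- x = 1
    have hκ0L : κ 0 L = false := hLnb 0 (by decide)
    have hκ1L : κ 1 L = false := hLnb 1 (by decide)
    have hκ2L : κ 2 L = false := hLnb 2 (by decide)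
    have hc0 : col (deposit κ 1) 0 = col κ 0 := col_deposit_ne κ (by decide)
    have hc1 : col (deposit κ 1) 1 = insert L (col κ 1) := by
      rw [col_deposit_self, hLdef]
    have hc2 : col (deposit κ 1) 2 = col κ 2 := col_deposit_ne κ (by decide)
    have hLeq : L = N + 1 := by
      apply le_antisymm
      · exact hLdef ▸ Nat.sInf_le hAne
      · by_contra hlt
        push_neg at hlt
        have hLN : L ≤ N := by omega
        have : L ∈ Set.Icc 1 N := ⟨hL1, hLN⟩
        rw [← hU] at this
        rcases this with (h0 | h1) | h2
        · simp [col] at h0; simp [h0] at hκ0L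
        · simp [col] at h1; simp [h1] at hκ1L
        · simp [col] at h2; simp [h2] at hκ2L
    refine ⟨N + 1, ?_, ?_, ?_⟩
    · rw [hc0, hc1, hc2]
      ext r
      simp only [Set.mem_union, Set.mem_insert_iff, Set.mem_Icc]
      constructor
      · rintro ((h0 | (heq | h1)) | h2)
        · have := hfin 0 h0; simp [Set.mem_Icc] at this; omega
        · omega
        · have := hfin 1 h1; simp [Set.mem_Icc] at this; omega
        · have := hfin 2 h2; simp [Set.mem_Icc] at this; omega
      · intro hr
        by_cases hrN : r ≤ N
        · have : r ∈ Set.Icc 1 N := ⟨hr.1, hrN⟩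
          rw [← hU] at this
          rcases this with (h0 | h1) | h2
          · exact Or.inl (Or.inl h0)
          · exact Or.inl (Or.inr (Or.inr h1))
          · exact Or.inr h2
        · have : r = N + 1 := by omega
          exact Or.inl (Or.inr (Or.inl (this.trans hLeq.symm)))
    · intro r hr
      by_cases hrL : r = L
      · constructor
        · have : deposit κ 1 0 r = κ 0 r := by simp [deposit]
          rw [this, hrL]; exact hκ0L
        · have : deposit κ 1 2 r = κ 2 r := by simp [deposit]
          rw [this, hrL]; exact hκ2L
      · have hr' : κ 1 r = true := by simpa [deposit, hLdef, hrL] using hr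
        obtain ⟨h0, h2⟩ := hD r hr'
        constructor
        · simp [deposit, hLdef, h0]
        · simp [deposit, hLdef, h2]
    · rw [hc0, hc2]; exact hC
  · -- x = 2
    have hκ2L : κ 2 L = false := hLnb 2 (by decide)
    have hκ1L : κ 1 L = false := hLnb 1 (by decide)
    have hc2 : col (deposit κ 2) 2 = insert L (col κ 2) := by
      rw [col_deposit_self, hLdef]
    have hc1 : col (deposit κ 2) 1 = col κ 1 := col_deposit_ne κ (by decide)
    have hc0 : col (deposit κ 2) 0 = col κ 0 := col_deposit_ne κ (by decide)
    by_cases hsub : col κ 0 ⊆ col κ 2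
    · have hLeq : L = N + 1 := by
        apply le_antisymm
        · exact hLdef ▸ Nat.sInf_le hAne
        · by_contra hlt
          push_neg at hlt
          have hLN : L ≤ N := by omega
          have : L ∈ Set.Icc 1 N := ⟨hL1, hLN⟩
          rw [← hU] at this
          rcases this with (h0 | h1) | h2
          · have := hsub h0; simp [col] at this; simp [this] at hκ2L
          · simp [col] at h1; simp [h1] at hκ1L
          · simp [col] at h2; simp [h2] at hκ2L
      refine ⟨N + 1, ?_, ?_, ?_⟩
      · rw [hc0, hc1, hc2]
        ext r
        simp only [Set.mem_union, Set.mem_insert_iff, Set.mem_Icc]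
        constructor
        · rintro ((h0 | h1) | (heq | h2))
          · have := hfin 0 h0; simp [Set.mem_Icc] at this; omega
          · have := hfin 1 h1; simp [Set.mem_Icc] at this; omega
          · omega
          · have := hfin 2 h2; simp [Set.mem_Icc] at this; omega
        · intro hr
          by_cases hrN : r ≤ N
          · have : r ∈ Set.Icc 1 N := ⟨hr.1, hrN⟩
            rw [← hU] at this
            rcases this with (h0 | h1) | h2
            · exact Or.inl (Or.inl h0)
            · exact Or.inl (Or.inr h1)
            · exact Or.inr (Or.inr h2)
          · have : r = N + 1 := by omega
            exact Or.inr (Or.inl (this.trans hLeq.symm))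
      · intro r hr
        have hr' : κ 1 r = true := by simpa [deposit, hLdef] using hr
        obtain ⟨h0, h2⟩ := hD r hr'
        have hrL : r ≠ L := by intro e; rw [e] at hr'; simp [hr'] at hκ1L
        constructor
        · simp [deposit, hLdef, h0]
        · simp [deposit, hLdef, hrL, h2]
      · left
        rw [hc0, hc2]
        exact hsub.trans (Set.subset_insert _ _)
    · have hS20 : col κ 2 ⊆ col κ 0 := hC.resolve_left hsub
      obtain ⟨m, hm0, hm2⟩ := Set.not_subset.mp hsub
      have hm1 : κ 1 m = false := by
        by_contra hcon
        simp [Bool.not_eq_false] at hcon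
        have := (hD m hcon).1
        simp [col, this] at hm0
      have hmIcc := hfin 0 hm0
      have hmA : m ∈ {r : ℕ | 1 ≤ r ∧ ∀ y : Fin 3, |(((2:Fin 3)) : ℤ) - (y : ℤ)| ≤ 1 → κ y r = false} := by
        refine ⟨hmIcc.1, ?_⟩
        intro y hy
        fin_cases y
        · exact absurd hy (by decide)
        · exact hm1
        · simpa [col, Bool.not_eq_true] using hm2
      have hLm : L ≤ m := hLdef ▸ Nat.sInf_le hmA
      have hLN : L ≤ N := hLm.trans hmIcc.2
      have hL0 : L ∈ col κ 0 := by
        have : L ∈ Set.Icc 1 N := ⟨hL1, hLN⟩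
        rw [← hU] at this
        rcases this with (h0 | h1) | h2
        · exact h0
        · simp [col] at h1; simp [h1] at hκ1L
        · simp [col] at h2; simp [h2] at hκ2L
      refine ⟨N, ?_, ?_, ?_⟩
      · rw [hc0, hc1, hc2, ← hU]
        ext r
        simp only [Set.mem_union, Set.mem_insert_iff]
        constructor
        · rintro ((h0 | h1) | (heq | h2))
          · exact Or.inl (Or.inl h0)
          · exact Or.inl (Or.inr h1)
          · rw [heq]; exact Or.inl (Or.inl hL0)
          · exact Or.inr h2
        · rintro ((h0 | h1) | h2)
          · exact Or.inl (Or.inl h0)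
          · exact Or.inl (Or.inr h1)
          · exact Or.inr (Or.inr h2)
      · intro r hr
        have hr' : κ 1 r = true := by simpa [deposit, hLdef] using hr
        obtain ⟨h0, h2⟩ := hD r hr'
        have hrL : r ≠ L := by intro e; rw [e] at hr'; simp [hr'] at hκ1L
        constructor
        · simp [deposit, hLdef, h0]
        · simp [deposit, hLdef, hrL, h2]
      · right
        rw [hc0, hc2]
        exact Set.insert_subset hL0 hS20

lemma park_inv (w : List (Fin 3)) :
    Good (parkConfig w) ∧ ∀ y : Fin 3, (col (parkConfig w) y).ncard = w.count y := by
  induction w using List.reverseRecOn with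
  | nil =>
    constructor
    · refine ⟨0, ?_, ?_, ?_⟩
      · simp [parkConfig, col, Set.Icc]
        ext r; simp; omega
      · intro r hr; simp [parkConfig] at hr
      · left; intro r hr; simp [parkConfig, col] at hr
    · intro y; simp [parkConfig, col]
  | append_singleton w x ih =>
    obtain ⟨hG, hcard⟩ := ih
    have hpark : parkConfig (w ++ [x]) = deposit (parkConfig w) x := by
      simp [parkConfig]
    obtain ⟨hG', hfalse⟩ := good_step (parkConfig w) x hG
    obtain ⟨N, hU, _, _⟩ := hG
    have hfin : ∀ y : Fin 3, (col (parkConfig w) y).Finite := by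
      intro y
      apply (Set.finite_Icc 1 N).subset
      intro r hr
      rw [← hU]
      fin_cases y
      · exact Or.inl (Or.inl hr)
      · exact Or.inl (Or.inr hr)
      · exact Or.inr hr
    rw [hpark]
    refine ⟨hG', ?_⟩
    intro y
    by_cases hyx : y = x
    · subst hyx
      rw [col_deposit_self, Set.ncard_insert_of_notMem (by simp [col, hfalse]) (hfin y),
        hcard y, List.count_append]
      simp
    · rw [col_deposit_ne _ hyx, hcard y, List.count_append]
      simp [List.count_singleton, hyx, Ne.symm hyx]

/-- The number of layers `r ≥ 1` in which both side columns are occupied in the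
final configuration `κ_w` equals `min (n₀(w)) (n₂(w))`. -/
theorem both_sides_occupied_eq (w : List (Fin 3)) :
    {r : ℕ | 1 ≤ r ∧ parkConfig w 0 r = true ∧ parkConfig w 2 r = true}.ncard =
      min (w.count 0) (w.count 2) := by
  obtain ⟨⟨N, hU, hD, hC⟩, hcard⟩ := park_inv w
  set κ := parkConfig w
  have hfin : ∀ y : Fin 3, (col κ y).Finite := by
    intro y
    apply (Set.finite_Icc 1 N).subset
    intro r hr
    rw [← hU]
    fin_cases y
    · exact Or.inl (Or.inl hr)
    · exact Or.inl (Or.inr hr)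
    · exact Or.inr hr
  have h1le : ∀ r, r ∈ col κ 0 → 1 ≤ r := by
    intro r hr
    have : r ∈ Set.Icc 1 N := by rw [← hU]; exact Or.inl (Or.inl hr)
    exact this.1
  have hset : {r : ℕ | 1 ≤ r ∧ κ 0 r = true ∧ κ 2 r = true} = col κ 0 ∩ col κ 2 := by
    ext r
    simp only [Set.mem_setOf_eq, Set.mem_inter_iff, col]
    constructor
    · rintro ⟨_, h0, h2⟩; exact ⟨h0, h2⟩
    · rintro ⟨h0, h2⟩; exact ⟨h1le r h0, h0, h2⟩
  rw [hset, ← hcard 0, ← hcard 2]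
  rcases hC with hsub | hsub
  · rw [Set.inter_eq_self_of_subset_left hsub]
    rw [min_eq_left (Set.ncard_le_ncard hsub (hfin 2))]
  · rw [Set.inter_eq_self_of_subset_right hsub]
    rw [min_eq_right (Set.ncard_le_ncard hsub (hfin 0))]
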